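/- Let L be a rank-2 positive definite even integral lattice containing a norm-2 vector r such that the norm-2 vectors of L span a rank-1 sublattice. Let s generate the annihilator of r in L (the vectors orthogonal to r). Then (s,s) ≥ 4, and if L strictly contains the span of {r,s}, then (s,s) ≡ 6 (mod 8) and (s,s) ≥ 14. -/

import Mathlib

/-- Auxiliary: two linearly independent vectors in a span force its finrank to be
at least two. Stated over a general ring to avoid `ℤ`-module instance diamonds. -/
theorem stmt_2_aux {R M : Type*} [CommRing R] [StrongRankCondition R] [IsNoetherianRing R]
    [AddCommGroup M] [Module R M] [Module.Finite R M] {S : Set M} {u v : M}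
    (hu : u ∈ Submodule.span R S) (hv : v ∈ Submodule.span R S)
    (hind : LinearIndependent R ![u, v]) :
    2 ≤ Module.finrank R ↥(Submodule.span R S) := by
  haveI : IsNoetherian R M := isNoetherian_of_isNoetherianRing_of_finite R M
  haveI : Module.Finite R ↥(Submodule.span R S) :=
    Module.Finite.iff_fg.mpr (IsNoetherian.noetherian _)
  have hind' : LinearIndependent R (![⟨u, hu⟩, ⟨v, hv⟩] : Fin 2 → ↥(Submodule.span R S)) := by
    apply LinearIndependent.of_comp (Submodule.span R S).subtype
    convert hind using 1
    ext i; fin_cases i <;> rfl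
  simpa using hind'.fintype_card_le_finrank

/-- rank-2 positive definite even lattice whose norm-2 vectors span a
rank-1 sublattice; `s` generates the annihilator of a norm-2 vector `r`. -/
theorem stmt_2 (L : Type*) [AddCommGroup L] [Module ℤ L] [Module.Free ℤ L]
    [Module.Finite ℤ L] (hrank : Module.finrank ℤ L = 2)
    (B : L →ₗ[ℤ] L →ₗ[ℤ] ℤ)
    (hsymm : ∀ x y, B x y = B y x)
    (heven : ∀ x, Even (B x x))
    (hpos : ∀ x, x ≠ 0 → 0 < B x x)
    (r : L) (hr : B r r = 2)
    (hspan1 : Module.finrank ℤ (Submodule.span ℤ {x : L | B x x = 2}) = 1)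
    (s : L) (hs : Submodule.span ℤ ({s} : Set L) = LinearMap.ker (B.flip r)) :
    4 ≤ B s s ∧
      (Submodule.span ℤ ({r, s} : Set L) ≠ ⊤ → B s s % 8 = 6 ∧ 14 ≤ B s s) := by
  classical
  haveI : NoZeroSMulDivisors ℤ L :=
    have : IsAddTorsionFree L := .of_isTorsionFree ℤ L; inferInstance
  have hsr : B s r = 0 := by
    have hmem : s ∈ LinearMap.ker (B.flip r) := by
      rw [← hs]; exact Submodule.mem_span_singleton_self s
    simpa using hmem
  have hrs : B r s = 0 := by rw [hsymm]; exact hsr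
  have hr0 : r ≠ 0 := by
    intro h; rw [h] at hr; simp at hr
  have hsne : s ≠ 0 := by
    intro h
    have hker : LinearMap.ker (B.flip r) = ⊥ := by
      rw [← hs, h, Submodule.span_zero_singleton]
    have hinj : Function.Injective (B.flip r) := LinearMap.ker_eq_bot.mp hker
    have hle := LinearMap.finrank_le_finrank_of_injective hinj
    rw [hrank, Module.finrank_self] at hle
    omega
  -- two independent norm-2 vectors contradict hspan1
  have card_le : ∀ u v : L, B u u = 2 → B v v = 2 → LinearIndependent ℤ ![u, v] → False := by
    intro u v hu hv hind
    haveI : Subsingleton (Module ℤ ↥(Submodule.span ℤ {x : L | B x x = 2})) := ⟨fun a b => by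
      haveI := AddCommGroup.uniqueIntModule (M := ↥(Submodule.span ℤ {x : L | B x x = 2}))
      exact Subsingleton.elim a b⟩
    have hu' : u ∈ Submodule.span ℤ {x : L | B x x = 2} := Submodule.subset_span hu
    have hv' : v ∈ Submodule.span ℤ {x : L | B x x = 2} := Submodule.subset_span hv
    have h := stmt_2_aux hu' hv' hind
    have h2 : (2 : ℕ) ≤ 1 := by
      rw [← hspan1]
      convert h using 2 <;> rfl
    omega
  -- decomposition: for every x, x + x lies in span {r, s}
  have decomp : ∀ x : L, ∃ k : ℤ, x + x = B x r • r + k • s := by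
    intro x
    have hy : x + x - B x r • r ∈ LinearMap.ker (B.flip r) := by
      rw [LinearMap.mem_ker]
      simp only [← Int.cast_smul_eq_zsmul ℤ (M := L), Int.cast_id, LinearMap.flip_apply,
        map_sub, map_add, map_smul, LinearMap.sub_apply, LinearMap.add_apply,
        LinearMap.smul_apply, smul_eq_mul, hr]
      ring
    rw [← hs, Submodule.mem_span_singleton] at hy
    obtain ⟨k, hk⟩ := hy
    refine ⟨k, ?_⟩
    simp only [← Int.cast_smul_eq_zsmul ℤ (M := L), Int.cast_id] at hk ⊢
    rw [hk]
    abel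
  have hmpos : 0 < B s s := hpos s hsne
  have hmeven := heven s
  have h4 : 4 ≤ B s s := by
    by_contra hlt
    push_neg at hlt
    have h2 : B s s = 2 := by obtain ⟨c, hc⟩ := hmeven; omega
    have hind : LinearIndependent ℤ ![r, s] := by
      rw [LinearIndependent.pair_iff]
      intro a b hab
      have h1 := congrArg (fun z : L => B z r) hab
      have h2' := congrArg (fun z : L => B z s) hab
      simp only [map_add, map_smul, LinearMap.add_apply, LinearMap.smul_apply,
        smul_eq_mul, hr, hsr, hrs, h2, map_zero, LinearMap.zero_apply] at h1 h2'
      constructor <;> omega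
    exact (card_le r s hr h2 hind).elim
  refine ⟨h4, fun hne => ?_⟩
  obtain ⟨t, ht⟩ : ∃ t : L, t ∉ Submodule.span ℤ ({r, s} : Set L) := by
    by_contra h; push_neg at h; exact hne (Submodule.eq_top_iff'.mpr h)
  obtain ⟨k, hk⟩ := decomp t
  simp only [← Int.cast_smul_eq_zsmul ℤ (M := L), Int.cast_id] at hk
  rcases Int.even_or_odd (B t r) with ⟨a', ha'⟩ | ⟨a', ha'⟩
  · -- B t r even
    rw [ha'] at hk
    rcases Int.even_or_odd k with ⟨k', hk'⟩ | ⟨k', hk'⟩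
    · -- both even: t ∈ span, contradiction
      exfalso
      rw [hk'] at hk
      have h1 : (2 : ℤ) • (t - (a' • r + k' • s)) = 0 := by
        simp only [← Int.cast_smul_eq_zsmul ℤ (M := L), Int.cast_id]
        linear_combination (norm := module) hk
      simp only [← Int.cast_smul_eq_zsmul ℤ (M := L), Int.cast_id] at h1
      rcases smul_eq_zero.1 h1 with h | h
      · norm_num at h
      · rw [sub_eq_zero] at h
        apply ht
        rw [Submodule.mem_span_pair]
        exact ⟨a', k', h.symm⟩
    · -- B t r even, k odd
      exfalso
      rw [hk'] at hk
      obtain ⟨w, hw⟩ : ∃ w : L, w + w = (2 * k' + 1) • s :=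
        ⟨t - a' • r, by
          simp only [← Int.cast_smul_eq_zsmul ℤ (M := L), Int.cast_id]
          linear_combination (norm := module) hk⟩
      simp only [← Int.cast_smul_eq_zsmul ℤ (M := L), Int.cast_id] at hw
      have hwr : B w r = 0 := by
        have h1 := congrArg (fun z : L => B z r) hw
        simp only [map_smul, LinearMap.smul_apply, smul_eq_mul, hsr, map_add,
          LinearMap.add_apply] at h1
        omega
      have hm : w ∈ Submodule.span ℤ ({s} : Set L) := by
        rw [hs, LinearMap.mem_ker]
        simpa using hwr
      rw [Submodule.mem_span_singleton] at hm
      obtain ⟨c, hc⟩ := hm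
      have h1 : (2 * k' + 1 - (c + c)) • s = 0 := by
        simp only [← Int.cast_smul_eq_zsmul ℤ (M := L), Int.cast_id]
        linear_combination (norm := module) -hw - hc - hc
      simp only [← Int.cast_smul_eq_zsmul ℤ (M := L), Int.cast_id] at h1
      rcases smul_eq_zero.1 h1 with h | h
      · omega
      · exact hsne h
  · -- B t r odd
    rw [ha'] at hk
    rcases Int.even_or_odd k with ⟨k', hk'⟩ | ⟨k', hk'⟩
    · -- B t r odd, k even : impossible by evenness
      exfalso
      rw [hk'] at hk
      obtain ⟨w, hw⟩ : ∃ w : L, w + w = (2 * a' + 1) • r :=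
        ⟨t - k' • s, by
          simp only [← Int.cast_smul_eq_zsmul ℤ (M := L), Int.cast_id]
          linear_combination (norm := module) hk⟩
      simp only [← Int.cast_smul_eq_zsmul ℤ (M := L), Int.cast_id] at hw
      have hBB := congrArg (fun z : L => B z z) hw
      simp only [map_add, map_smul, LinearMap.add_apply, LinearMap.smul_apply,
        smul_eq_mul, hr] at hBB
      have heq : B w w * 4 = 8 * (a' * a') + 8 * a' + 2 := by linear_combination hBB
      generalize a' * a' = q at heq
      omega
    · -- B t r odd, k odd : the crucial case
      rw [hk'] at hk
      obtain ⟨x, hx⟩ : ∃ x : L, x + x = r + s :=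
        ⟨t - (a' • r + k' • s), by
          simp only [← Int.cast_smul_eq_zsmul ℤ (M := L), Int.cast_id]
          linear_combination (norm := module) hk⟩
      have hBB := congrArg (fun z : L => B z z) hx
      simp only [map_add, LinearMap.add_apply, hr, hrs, hsr] at hBB
      obtain ⟨c, hc⟩ := heven x
      have hm6 : B s s ≠ 6 := by
        intro h6
        have hxx : B x x = 2 := by omega
        have hxs : B x s = 3 := by
          have h1 := congrArg (fun z : L => B z s) hx
          simp only [map_add, LinearMap.add_apply, hrs, h6] at h1
          omega
        have hxr : B x r = 1 := by
          have h1 := congrArg (fun z : L => B z r) hx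
          simp only [map_add, LinearMap.add_apply, hr, hsr] at h1
          omega
        have hind : LinearIndependent ℤ ![x, r] := by
          rw [LinearIndependent.pair_iff]
          intro α β hab
          have h1 := congrArg (fun z : L => B z s) hab
          have h2 := congrArg (fun z : L => B z r) hab
          simp only [map_add, map_smul, LinearMap.add_apply, LinearMap.smul_apply,
            smul_eq_mul, hxs, hxr, hrs, hsr, hr, map_zero, LinearMap.zero_apply] at h1 h2
          constructor <;> omega
        exact card_le x r hxx hr hind
      constructor <;> omega
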